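/- Let β > 0, k ≥ 1, s ∈ ℝ, and c_1, …, c_k ∈ ℝ, and define s_n = s + Σ_{j=1}^k c_j·(n+β)^{−j}. Then the standard form of Richardson extrapolation is exact for this sequence: Λ_k^{(n)}(β, s_n) = s for all n ≥ 0. -/

import Mathlib

open Finset fwdDiff

lemma fwdDiff_pow_shift (m : ℕ) (a : ℝ) :
    Δ_[(1:ℝ)] (fun x : ℝ => (x + a) ^ m) =
      fun x : ℝ => ∑ r ∈ Finset.range m, (m.choose r : ℝ) * (x + a) ^ r := by
  ext x
  have h := add_pow (x + a) (1:ℝ) m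
  simp only [fwdDiff]
  rw [show x + 1 + a = x + a + 1 by ring, h, Finset.sum_range_succ]
  simp [mul_comm]

lemma fwdDiff_iter_pow_shift_of_lt :
    ∀ m : ℕ, ∀ a : ℝ, ∀ k : ℕ, m < k → (Δ_[(1:ℝ)])^[k] (fun x : ℝ => (x + a) ^ m) = 0 := by
  intro m
  induction m using Nat.strong_induction_on with
  | _ m IH =>
    intro a k hk
    obtain ⟨k', rfl⟩ : ∃ k', k = k' + 1 := ⟨k - 1, by omega⟩
    rw [Function.iterate_succ_apply, fwdDiff_pow_shift]
    have : (fun x : ℝ => ∑ r ∈ Finset.range m, (m.choose r : ℝ) * (x + a) ^ r)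
        = ∑ r ∈ Finset.range m, (m.choose r : ℝ) • (fun x : ℝ => (x + a) ^ r) := by
      ext x; simp [smul_eq_mul]
    rw [this, fwdDiff_iter_finset_sum]
    apply Finset.sum_eq_zero
    intro r hr
    have hr' := Finset.mem_range.mp hr
    rw [fwdDiff_iter_const_smul, IH r hr' a k' (by omega), smul_zero]

lemma fwdDiff_iter_pow_shift_self :
    ∀ m : ℕ, ∀ a : ℝ, (Δ_[(1:ℝ)])^[m] (fun x : ℝ => (x + a) ^ m) = fun _ => (m.factorial : ℝ) := by
  intro m
  induction m with
  | zero => intro a; ext x; simp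
  | succ m IH =>
    intro a
    rw [Function.iterate_succ_apply, fwdDiff_pow_shift]
    have : (fun x : ℝ => ∑ r ∈ Finset.range (m+1), ((m+1).choose r : ℝ) * (x + a) ^ r)
        = ∑ r ∈ Finset.range (m+1), ((m+1).choose r : ℝ) • (fun x : ℝ => (x + a) ^ r) := by
      ext x; simp [smul_eq_mul]
    rw [this, fwdDiff_iter_finset_sum, Finset.sum_range_succ]
    ext x
    simp only [fwdDiff_iter_const_smul]
    have hz : ∀ r ∈ Finset.range m,
        ((m+1).choose r : ℝ) • (Δ_[(1:ℝ)])^[m] (fun x : ℝ => (x + a) ^ r) = 0 := by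
      intro r hr
      rw [fwdDiff_iter_pow_shift_of_lt r a m (Finset.mem_range.mp hr), smul_zero]
    rw [Finset.sum_eq_zero hz, IH a]
    simp [Nat.choose_succ_self_right, Nat.factorial_succ]


/-- The standard form of Richardson extrapolation with shift parameter `β`:
`Λ_k⁽ⁿ⁾(β, sₙ) = (-1)^k Σ_{j=0}^k (-1)^j (β+n+j)^k / (j!(k-j)!) · s_{n+j}`. -/
noncomputable def lambdaRich (β : ℝ) (s : ℕ → ℝ) (k n : ℕ) : ℝ :=
  (-1 : ℝ) ^ k * ∑ j ∈ Finset.range (k + 1),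
    (-1 : ℝ) ^ j * (β + n + j) ^ k /
      ((Nat.factorial j : ℝ) * (Nat.factorial (k - j) : ℝ)) * s (n + j)

/-- the standard form of Richardson extrapolation is exact for
sequences of the form `sₙ = s + Σ_{j=1}^k cⱼ·(n+β)^{-j}`: `Λ_k⁽ⁿ⁾(β, sₙ) = s`. -/
theorem lambdaRich_exact (β : ℝ) (hβ : 0 < β) (k : ℕ) (hk : 1 ≤ k)
    (s : ℝ) (c : ℕ → ℝ) (sn : ℕ → ℝ)
    (hsn : ∀ n : ℕ, sn n = s + ∑ j ∈ Finset.Icc 1 k, c j * ((n : ℝ) + β) ^ (-(j : ℤ))) :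
    ∀ n : ℕ, lambdaRich β sn k n = s := by
  intro n
  set a : ℝ := β + n with ha
  set F : ℝ → ℝ := fun x =>
    s * (x + a) ^ k + ∑ i ∈ Finset.Icc 1 k, c i * (x + a) ^ (k - i) with hF
  have hkfac : (k.factorial : ℝ) ≠ 0 := Nat.cast_ne_zero.mpr k.factorial_ne_zero
  -- k-th forward difference of F is s * k!
  have hFdiff : (Δ_[(1:ℝ)])^[k] F 0 = s * (k.factorial : ℝ) := by
    have : F = s • (fun x : ℝ => (x + a) ^ k)
        + ∑ i ∈ Finset.Icc 1 k, c i • (fun x : ℝ => (x + a) ^ (k - i)) := by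
      ext x; simp [hF, smul_eq_mul]
    rw [this, fwdDiff_iter_add, fwdDiff_iter_finset_sum]
    simp only [fwdDiff_iter_const_smul]
    rw [fwdDiff_iter_pow_shift_self k a]
    have hz : ∀ i ∈ Finset.Icc 1 k,
        c i • (Δ_[(1:ℝ)])^[k] (fun x : ℝ => (x + a) ^ (k - i)) = 0 := by
      intro i hi
      have hi' := Finset.mem_Icc.mp hi
      rw [fwdDiff_iter_pow_shift_of_lt (k - i) a k (by omega), smul_zero]
    rw [Finset.sum_eq_zero hz]
    simp [smul_eq_mul]
  -- value of F at natural points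
  have hFj : ∀ j : ℕ, F (j : ℝ) = (β + n + j) ^ k * sn (n + j) := by
    intro j
    have hX : (0:ℝ) < (j : ℝ) + a := by positivity
    have hXne : ((j : ℝ) + a) ≠ 0 := ne_of_gt hX
    rw [hsn (n + j)]
    have hcast : ((n + j : ℕ) : ℝ) + β = (j : ℝ) + a := by push_cast [ha]; ring
    rw [hcast]
    have : ∀ i ∈ Finset.Icc 1 k,
        c i * ((j : ℝ) + a) ^ (-(i : ℤ)) * ((j : ℝ) + a) ^ k
          = c i * ((j : ℝ) + a) ^ (k - i) := by
      intro i hi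
      have hi' := Finset.mem_Icc.mp hi
      have : ((j : ℝ) + a) ^ (-(i : ℤ)) * ((j : ℝ) + a) ^ k
          = ((j : ℝ) + a) ^ (k - i) := by
        rw [← zpow_natCast ((j:ℝ) + a) k, ← zpow_add₀ hXne,
          ← zpow_natCast ((j:ℝ) + a) (k - i)]
        congr 1
        omega
      rw [mul_assoc, this]
    rw [show (β + (n:ℝ) + j) = (j : ℝ) + a by rw [ha]; ring]
    rw [mul_comm, add_mul, Finset.sum_mul, Finset.sum_congr rfl this, hF]
  -- the sum formula for the k-th forward difference
  have hsum := fwdDiff_iter_eq_sum_shift (1:ℝ) F k 0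
  rw [hFdiff] at hsum
  have hterm : ∀ j ∈ Finset.range (k + 1),
      (((-1 : ℤ) ^ (k - j) * (k.choose j : ℤ)) • F ((0:ℝ) + j • (1:ℝ)))
      = (-1 : ℝ) ^ k * (k.factorial : ℝ) *
          ((-1 : ℝ) ^ j * (β + n + j) ^ k /
            ((Nat.factorial j : ℝ) * (Nat.factorial (k - j) : ℝ)) * sn (n + j)) := by
    intro j hj
    have hjk : j ≤ k := by
      have := Finset.mem_range.mp hj; omega
    have h1 : ((0:ℝ) + j • (1:ℝ)) = (j : ℝ) := by simp
    rw [h1, hFj j, zsmul_eq_mul]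
    push_cast
    have hsgn : (-1 : ℝ) ^ (k - j) = (-1 : ℝ) ^ k * (-1 : ℝ) ^ j := by
      have hmul : (-1 : ℝ) ^ (k - j) * (-1 : ℝ) ^ j = (-1 : ℝ) ^ k := by
        rw [← pow_add, Nat.sub_add_cancel hjk]
      have h2 : (-1 : ℝ) ^ j * (-1 : ℝ) ^ j = 1 := by
        rw [← pow_add]; exact Even.neg_one_pow ⟨j, rfl⟩
      calc (-1 : ℝ) ^ (k - j)
          = (-1 : ℝ) ^ (k - j) * ((-1:ℝ)^j * (-1:ℝ)^j) := by rw [h2, mul_one]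
        _ = (-1 : ℝ) ^ k * (-1 : ℝ) ^ j := by rw [← mul_assoc, hmul]
    have hjfac : (j.factorial : ℝ) ≠ 0 := Nat.cast_ne_zero.mpr j.factorial_ne_zero
    have hkjfac : ((k - j).factorial : ℝ) ≠ 0 := Nat.cast_ne_zero.mpr (k - j).factorial_ne_zero
    have hcf : (k.choose j : ℝ) = (k.factorial : ℝ) /
        ((j.factorial : ℝ) * ((k - j).factorial : ℝ)) := by
      rw [eq_div_iff (mul_ne_zero hjfac hkjfac), ← mul_assoc]
      exact_mod_cast congrArg (fun t : ℕ => (t : ℝ)) (Nat.choose_mul_factorial_mul_factorial hjk)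
    rw [hsgn, hcf]
    field_simp
  rw [Finset.sum_congr rfl hterm, ← Finset.mul_sum] at hsum
  rw [lambdaRich]
  set T := ∑ j ∈ Finset.range (k + 1),
      (-1 : ℝ) ^ j * (β + n + j) ^ k /
        ((Nat.factorial j : ℝ) * (Nat.factorial (k - j) : ℝ)) * sn (n + j) with hT
  rcases Nat.even_or_odd k with he | ho
  · rw [he.neg_one_pow] at hsum ⊢
    rw [one_mul]
    exact mul_left_cancel₀ hkfac (by linear_combination -hsum)
  · rw [ho.neg_one_pow] at hsum ⊢
    have hS : (k.factorial : ℝ) * T = (k.factorial : ℝ) * (-s) := by linear_combination hsum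
    have := mul_left_cancel₀ hkfac hS
    linarith
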